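/- Let g = f ⊕ f ⊕ f ⊕ f for a Lie algebra f, and define k = {(X,X,X,X)}, m₁ = {(X,X,-X,-X)}, m₂ = {(X,-X,X,-X)}, m₃ = {(X,-X,-X,X)} (X ranging over f). Then g = k ⊕ m₁ ⊕ m₂ ⊕ m₃ as a direct sum of subspaces, and [mᵢ, mᵢ] ⊆ k for i = 1, 2, 3, while [m₁, m₂] ⊆ m₃, [m₁, m₃] ⊆ m₂, [m₂, m₃] ⊆ m₁. -/

import Mathlib

section PiLie

variable (f : Type*) [LieRing f] [LieAlgebra ℝ f]

/-- Componentwise Lie ring structure on `f⁴ = f × f × f × f`. -/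
instance piLieRing : LieRing (Fin 4 → f) where
  bracket u v := fun i => ⁅u i, v i⁆
  add_lie u v w := by funext i; exact add_lie _ _ _
  lie_add u v w := by funext i; exact lie_add _ _ _
  lie_self u := by funext i; exact lie_self _
  leibniz_lie u v w := by funext i; exact leibniz_lie _ _ _

/-- Componentwise Lie algebra structure on `f⁴`. -/
instance piLieAlgebra : LieAlgebra ℝ (Fin 4 → f) where
  lie_smul c u v := by funext i; exact lie_smul _ _ _

/-- The "signed diagonal" embedding `f → f⁴`, `X ↦ (ε₀X, ε₁X, ε₂X, ε₃X)`. -/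
def diagMap (ε : Fin 4 → ℝ) : f →ₗ[ℝ] (Fin 4 → f) :=
  LinearMap.pi fun i => ε i • LinearMap.id

lemma diagMap_apply (ε : Fin 4 → ℝ) (X : f) (i : Fin 4) :
    diagMap f ε X i = ε i • X := rfl

lemma bracket_apply (u v : Fin 4 → f) (i : Fin 4) : ⁅u, v⁆ i = ⁅u i, v i⁆ := rfl

lemma bracket_diag (ε δ : Fin 4 → ℝ) (X Y : f) :
    ⁅diagMap f ε X, diagMap f δ Y⁆ = diagMap f (fun i => ε i * δ i) ⁅X, Y⁆ := by
  funext i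
  rw [bracket_apply, diagMap_apply, diagMap_apply, diagMap_apply, smul_lie, lie_smul,
    smul_smul]

/-- The signed-sum functional `v ↦ ∑ εᵢ • vᵢ`. -/
def sumMap (ε : Fin 4 → ℝ) : (Fin 4 → f) →ₗ[ℝ] f :=
  ∑ i, ε i • LinearMap.proj i

lemma sumMap_apply (ε : Fin 4 → ℝ) (v : Fin 4 → f) :
    sumMap f ε v = ∑ i, ε i • v i := by
  simp [sumMap]

lemma sumMap_diag (ε δ : Fin 4 → ℝ) (X : f) :
    sumMap f ε (diagMap f δ X) = (∑ i, ε i * δ i) • X := by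
  simp [sumMap_apply, diagMap_apply, smul_smul, Finset.sum_smul]

lemma bracket_mem (ε δ η : Fin 4 → ℝ) (h : ∀ i, ε i * δ i = η i)
    (x y : Fin 4 → f) (hx : x ∈ LinearMap.range (diagMap f ε))
    (hy : y ∈ LinearMap.range (diagMap f δ)) :
    ⁅x, y⁆ ∈ LinearMap.range (diagMap f η) := by
  obtain ⟨X, rfl⟩ := hx
  obtain ⟨Y, rfl⟩ := hy
  refine ⟨⁅X, Y⁆, ?_⟩
  rw [show η = fun i => ε i * δ i from funext fun i => (h i).symm, bracket_diag]

/-- The four sign vectors. -/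
def Emat : Fin 4 → Fin 4 → ℝ :=
  ![![1, 1, 1, 1], ![1, 1, -1, -1], ![1, -1, 1, -1], ![1, -1, -1, 1]]

lemma Emat_orth : ∀ i j : Fin 4, i ≠ j → (∑ l, Emat i l * Emat j l) = 0 := by
  intro i j hij
  fin_cases i <;> fin_cases j <;> first
    | exact absurd rfl hij
    | norm_num [Emat, Fin.sum_univ_four, Matrix.cons_val_two, Matrix.cons_val_three, Matrix.tail_cons,
      Matrix.head_cons]

lemma Emat_self : ∀ i : Fin 4, (∑ l, Emat i l * Emat i l) = 4 := by
  intro i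
  fin_cases i <;> norm_num [Emat, Fin.sum_univ_four, Matrix.cons_val_two, Matrix.cons_val_three, Matrix.tail_cons,
      Matrix.head_cons]

/-- For `g = f ⊕ f ⊕ f ⊕ f` with `k = {(X,X,X,X)}`, `m₁ = {(X,X,-X,-X)}`,
`m₂ = {(X,-X,X,-X)}`, `m₃ = {(X,-X,-X,X)}`, one has `g = k ⊕ m₁ ⊕ m₂ ⊕ m₃` as a
direct sum of subspaces, `[mᵢ,mᵢ] ⊆ k`, `[m₁,m₂] ⊆ m₃`, `[m₁,m₃] ⊆ m₂`, `[m₂,m₃] ⊆ m₁`. -/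
theorem stmt17 :
    let k : Submodule ℝ (Fin 4 → f) := LinearMap.range (diagMap f ![1, 1, 1, 1])
    let m1 : Submodule ℝ (Fin 4 → f) := LinearMap.range (diagMap f ![1, 1, -1, -1])
    let m2 : Submodule ℝ (Fin 4 → f) := LinearMap.range (diagMap f ![1, -1, 1, -1])
    let m3 : Submodule ℝ (Fin 4 → f) := LinearMap.range (diagMap f ![1, -1, -1, 1])
    (k ⊔ m1 ⊔ m2 ⊔ m3 = ⊤) ∧
    iSupIndep (![k, m1, m2, m3] : Fin 4 → Submodule ℝ (Fin 4 → f)) ∧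
    (∀ x ∈ m1, ∀ y ∈ m1, ⁅x, y⁆ ∈ k) ∧
    (∀ x ∈ m2, ∀ y ∈ m2, ⁅x, y⁆ ∈ k) ∧
    (∀ x ∈ m3, ∀ y ∈ m3, ⁅x, y⁆ ∈ k) ∧
    (∀ x ∈ m1, ∀ y ∈ m2, ⁅x, y⁆ ∈ m3) ∧
    (∀ x ∈ m1, ∀ y ∈ m3, ⁅x, y⁆ ∈ m2) ∧
    (∀ x ∈ m2, ∀ y ∈ m3, ⁅x, y⁆ ∈ m1) := by
  intro k m1 m2 m3
  have horth := Emat_orth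
  have hself : ∀ i : Fin 4, ∀ X : f, sumMap f (Emat i) (diagMap f (Emat i) X) = (4 : ℝ) • X := by
    intro i X
    rw [sumMap_diag, Emat_self]
  have hV : ![k, m1, m2, m3] = fun i => LinearMap.range (diagMap f (Emat i)) := by
    funext i; fin_cases i <;> rfl
  refine ⟨?_, ?_, ?_, ?_, ?_, ?_, ?_, ?_⟩
  · -- sup = ⊤
    rw [eq_top_iff]
    intro v _
    have hmem : ∀ i : Fin 4, ∀ X : f,
        diagMap f (Emat i) X ∈ k ⊔ m1 ⊔ m2 ⊔ m3 := by
      intro i X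
      fin_cases i
      · exact Submodule.mem_sup_left <| Submodule.mem_sup_left <|
          Submodule.mem_sup_left <| LinearMap.mem_range_self _ X
      · exact Submodule.mem_sup_left <| Submodule.mem_sup_left <|
          Submodule.mem_sup_right <| LinearMap.mem_range_self _ X
      · exact Submodule.mem_sup_left <| Submodule.mem_sup_right <|
          LinearMap.mem_range_self _ X
      · exact Submodule.mem_sup_right <| LinearMap.mem_range_self _ X
    have hv : v = ∑ i, diagMap f (Emat i) ((4 : ℝ)⁻¹ • sumMap f (Emat i) v) := by
      funext l
      simp only [Finset.sum_apply, diagMap_apply, sumMap_apply, smul_smul,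
        Finset.smul_sum, Fin.sum_univ_four]
      fin_cases l <;>
        · simp [Emat, Matrix.vecHead, Matrix.vecTail] ; module
    rw [hv]
    exact Submodule.sum_mem _ fun i _ => hmem i _
  · -- independence
    rw [hV]
    intro i
    rw [Submodule.disjoint_def]
    intro x hx hx'
    obtain ⟨X, rfl⟩ := hx
    have hker : (⨆ j, ⨆ (_ : j ≠ i), LinearMap.range (diagMap f (Emat j))) ≤
        LinearMap.ker (sumMap f (Emat i)) := by
      refine iSup_le fun j => iSup_le fun hj => ?_
      rintro _ ⟨Y, rfl⟩
      rw [LinearMap.mem_ker, sumMap_diag, horth i j (Ne.symm hj), zero_smul]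
    have h0 : sumMap f (Emat i) (diagMap f (Emat i) X) = 0 := hker hx'
    rw [hself i X] at h0
    have : X = 0 := by
      have := congrArg (fun z => (4 : ℝ)⁻¹ • z) h0
      simpa [smul_smul] using this
    rw [this, map_zero]
  · exact fun x hx y hy => bracket_mem f _ _ _
      (by intro i; fin_cases i <;> norm_num [Emat]) x y hx hy
  · exact fun x hx y hy => bracket_mem f _ _ _
      (by intro i; fin_cases i <;> norm_num [Emat]) x y hx hy
  · exact fun x hx y hy => bracket_mem f _ _ _
      (by intro i; fin_cases i <;> norm_num [Emat]) x y hx hy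
  · exact fun x hx y hy => bracket_mem f _ _ _
      (by intro i; fin_cases i <;> norm_num [Emat]) x y hx hy
  · exact fun x hx y hy => bracket_mem f _ _ _
      (by intro i; fin_cases i <;> norm_num [Emat]) x y hx hy
  · exact fun x hx y hy => bracket_mem f _ _ _
      (by intro i; fin_cases i <;> norm_num [Emat]) x y hx hy

end PiLie
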